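/- Let G = (V, E) be an edge-labeled DAG with labels c : E → ℝ and let j ∈ V be an intermediate vertex (having at least one predecessor and at least one successor). Let G − j denote the graph obtained by vertex elimination of j: its vertex set is V ∖ {j}; for every predecessor i of j and every successor k of j, the label of edge (i,k) becomes c(i,k) + c(j,k)·c(i,j) if (i,k) ∈ E, and otherwise the fill edge (i,k) with label c(j,k)·c(i,j) is inserted; all edges incident to j are removed and all other edges keep their labels. Then for all vertices s, t ∈ V ∖ {j}, the path sums agree: J_{G−j}(s, t) = J_G(s, t). -/

import Mathlib

open scoped Classical

/-- A path from `s` to `t`: a nonempty sequence of consecutive edges, recorded as the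
list of its vertices (at least two of them, consecutive ones related by `R`). -/
def IsPath {α : Type*} (R : α → α → Prop) (s t : α) (p : List α) : Prop :=
  2 ≤ p.length ∧ p.Chain' R ∧ p.head? = some s ∧ p.getLast? = some t

/-- The path sum `J_G(s,t)`: the sum over all paths from `s` to `t` of the product of
the edge labels along the path (an empty sum is `0`; in a finite dag there are only
finitely many paths, so the `tsum` is an honest finite sum). -/
noncomputable def pathSum {α : Type*} (R : α → α → Prop) (c : α → α → ℝ) (s t : α) : ℝ :=
  ∑' p : {p : List α // IsPath R s t p},
    ((p.1.zip p.1.tail).map (fun e => c e.1 e.2)).prod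

/-- Adjacency of the graph `G − j` obtained by vertex elimination of `j`:
the vertex `j` is isolated (removed), all other edges are kept, and for every
predecessor `i` and successor `k` of `j` the (possibly fill) edge `(i,k)` is present. -/
def elimAdj {V : Type*} [DecidableEq V] (A : V → V → Bool) (j : V) : V → V → Bool :=
  fun x y => !decide (x = j) && !decide (y = j) && (A x y || (A x j && A j y))

/-- Labels of `G − j`: for a predecessor `i` and successor `k` of `j`, the label of
`(i,k)` becomes `c i k + c j k * c i j` if `(i,k)` was an edge and `c j k * c i j`
otherwise (fill); all other edges keep their labels. -/
noncomputable def elimLab {V : Type*} [DecidableEq V] (A : V → V → Bool)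
    (c : V → V → ℝ) (j : V) : V → V → ℝ :=
  fun x y =>
    if A x j ∧ A j y then
      (if A x y then c x y + c j y * c x j else c j y * c x j)
    else c x y

section VE

variable {V : Type*} [Fintype V] [DecidableEq V]

noncomputable def pw (c : V → V → ℝ) (p : List V) : ℝ :=
  ((p.zip p.tail).map fun e => c e.1 e.2).prod

lemma pw_cons (c : V → V → ℝ) (a b : V) (r : List V) :
    pw c (a :: b :: r) = c a b * pw c (b :: r) := by
  simp [pw]

lemma pw_single (c : V → V → ℝ) (a : V) : pw c [a] = 1 := by simp [pw]

def IsWalk (R : V → V → Prop) (m t : V) (q : List V) : Prop :=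
  q.Chain' R ∧ q.head? = some m ∧ q.getLast? = some t

def listsLe : ℕ → Finset (List V)
  | 0 => {[]}
  | n+1 => {[]} ∪ (Finset.univ ×ˢ listsLe n).image (fun x => x.1 :: x.2)

lemma mem_listsLe {n : ℕ} {l : List V} : l ∈ listsLe n ↔ l.length ≤ n := by
  induction n generalizing l with
  | zero => cases l <;> simp [listsLe]
  | succ n ih => cases l <;> simp [listsLe, ih, Nat.succ_le_succ_iff]

lemma chain'_length_le {R : V → V → Prop} {f : V → ℕ}
    (hmono : ∀ a b, R a b → f a < f b) {l : List V} (hc : l.Chain' R) :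
    l.length ≤ Fintype.card V := by
  haveI : IsTrans V (fun a b => f a < f b) := ⟨fun _ _ _ => Nat.lt_trans⟩
  have hpw : l.Pairwise (fun a b => f a < f b) :=
    List.isChain_iff_pairwise.mp (hc.imp (fun {a b} h => hmono a b h))
  have hnd : l.Nodup := hpw.imp (fun h => by
    intro he; subst he; exact absurd h (lt_irrefl _))
  exact hnd.length_le_card

noncomputable def PF (R : V → V → Prop) (s t : V) : Finset (List V) :=
  (listsLe (Fintype.card V)).filter (fun p => IsPath R s t p)

noncomputable def WF (R : V → V → Prop) (m t : V) : Finset (List V) :=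
  (listsLe (Fintype.card V)).filter (fun q => IsWalk R m t q)

lemma pathSum_eq_sum {R : V → V → Prop} {f : V → ℕ}
    (hmono : ∀ a b, R a b → f a < f b) (c : V → V → ℝ) (s t : V) :
    pathSum R c s t = ∑ p ∈ PF R s t, pw c p := by
  have hset : ∀ p : List V, IsPath R s t p ↔ p ∈ PF R s t := by
    intro p
    constructor
    · intro h
      exact Finset.mem_filter.mpr ⟨mem_listsLe.mpr (chain'_length_le hmono h.2.1), h⟩
    · exact fun h => (Finset.mem_filter.mp h).2
  calc pathSum R c s t
      = ∑' p : {p : List V // IsPath R s t p}, pw c p.1 := rfl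
    _ = ∑' p : {p : List V // p ∈ PF R s t}, pw c p.1 :=
        (Equiv.tsum_eq (Equiv.subtypeEquivRight hset).symm (fun p => pw c p.1)).symm.trans
          (tsum_congr (fun p => congrArg (pw c) (by simp)))
    _ = ∑ p ∈ PF R s t, pw c p := Finset.tsum_subtype _ _

end VE


section VE2
variable {V : Type*} [Fintype V] [DecidableEq V]

lemma isPath_iff_isWalk {R : V → V → Prop} {s t : V} {p : List V} :
    IsPath R s t p ↔ 2 ≤ p.length ∧ IsWalk R s t p := by
  unfold IsPath IsWalk; tauto

lemma walk_sum_split {R : V → V → Prop} (c : V → V → ℝ) (m t : V) :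
    ∑ q ∈ WF R m t, pw c q
      = (if m = t then 1 else 0) + ∑ p ∈ PF R m t, pw c p := by
  rw [← Finset.sum_filter_add_sum_filter_not (WF R m t) (fun q => 2 ≤ q.length)]
  have h1 : (WF R m t).filter (fun q => 2 ≤ q.length) = PF R m t := by
    ext p
    simp only [WF, PF, Finset.mem_filter, Finset.filter_filter, isPath_iff_isWalk]
    tauto
  have h2 : (WF R m t).filter (fun q => ¬ 2 ≤ q.length)
      = if m = t then {[m]} else ∅ := by
    ext q
    constructor
    · intro hq
      rw [Finset.mem_filter] at hq
      obtain ⟨hqW, hshort⟩ := hq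
      rw [WF, Finset.mem_filter] at hqW
      obtain ⟨hlen, hc, hh, hl⟩ := hqW
      rcases q with _ | ⟨a, _ | ⟨b, r⟩⟩
      · simp at hh
      · have ham : a = m := by simpa using hh
        have hat : a = t := by simpa using hl
        rw [← ham, ← hat]
        simp
      · exact absurd (by simpa using Nat.le_add_left 2 r.length) hshort
    · intro hq
      by_cases hmt : m = t
      · subst hmt
        rw [if_pos rfl, Finset.mem_singleton] at hq
        subst hq
        rw [Finset.mem_filter]
        refine ⟨?_, by simp⟩
        rw [WF, Finset.mem_filter, mem_listsLe]
        exact ⟨Fintype.card_pos_iff.mpr ⟨m⟩, List.isChain_singleton _, rfl, rfl⟩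
      · rw [if_neg hmt] at hq; simp at hq
  rw [h1, h2, add_comm]
  congr 1
  split
  · next h => subst h; simp [pw_single]
  · simp

lemma exists_cons_of_isPath {R : V → V → Prop} {s t : V} {p : List V}
    (h : IsPath R s t p) : ∃ m r, p = s :: m :: r := by
  obtain ⟨hlen, _, hh, _⟩ := h
  match p with
  | [] => simp at hh
  | [a] => simp at hlen
  | a :: b :: r =>
    obtain rfl : a = s := by simpa using hh
    exact ⟨b, r, rfl⟩

lemma path_first_edge {R : V → V → Prop} {f : V → ℕ}
    (hmono : ∀ a b, R a b → f a < f b) (c : V → V → ℝ) (s t : V) :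
    ∑ p ∈ PF R s t, pw c p
      = ∑ m : V, (if R s m then c s m else 0) * ∑ q ∈ WF R m t, pw c q := by
  have step1 : ∀ m : V, (if R s m then c s m else 0) * ∑ q ∈ WF R m t, pw c q
      = ∑ q ∈ (WF R m t).filter (fun _ => R s m), c s m * pw c q := by
    intro m
    rw [Finset.sum_filter]
    by_cases h : R s m <;> simp [h, Finset.mul_sum]
  simp_rw [step1]
  rw [Finset.sum_sigma' Finset.univ
    (fun m => (WF R m t).filter (fun _ => R s m)) (fun m q => c s m * pw c q)]
  refine Finset.sum_nbij'
    (i := fun p => (⟨p.tail.head?.getD s, p.tail⟩ : Σ _ : V, List V))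
    (j := fun x => s :: x.2) ?_ ?_ ?_ ?_ ?_
  · -- maps PF into sigma
    intro p hp
    have hmem := (Finset.mem_filter.mp hp).1
    have hp' := (Finset.mem_filter.mp hp).2
    obtain ⟨m, r, rfl⟩ := exists_cons_of_isPath hp'
    obtain ⟨hlen, hc, hh, hl⟩ := hp'
    simp only [List.tail_cons, List.head?, Option.getD_some]
    refine Finset.mem_sigma.mpr ⟨Finset.mem_univ _, Finset.mem_filter.mpr
      ⟨Finset.mem_filter.mpr ⟨?_, ?_, rfl, ?_⟩, ?_⟩⟩
    · rw [mem_listsLe]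
      have := mem_listsLe.mp hmem
      simp only [List.length_cons] at this ⊢
      omega
    · exact (List.isChain_cons_cons.mp hc).2
    · simpa using hl
    · exact (List.isChain_cons_cons.mp hc).1
  · -- maps sigma into PF
    rintro ⟨m, q⟩ hx
    obtain ⟨-, hq⟩ := Finset.mem_sigma.mp hx
    obtain ⟨hqW, hRsm⟩ := Finset.mem_filter.mp hq
    obtain ⟨hqmem, hc, hh, hl⟩ := Finset.mem_filter.mp hqW
    dsimp only at hc hh hl hRsm
    rcases q with _ | ⟨b, r⟩
    · simp at hh
    · obtain rfl : b = m := by simpa using hh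
      refine Finset.mem_filter.mpr ⟨?_, ?_, ?_, rfl, ?_⟩
      · rw [mem_listsLe]
        exact chain'_length_le hmono (List.isChain_cons_cons.mpr ⟨hRsm, hc⟩)
      · simp
      · exact List.isChain_cons_cons.mpr ⟨hRsm, hc⟩
      · rw [List.getLast?_cons_cons]; exact hl

  · -- left inverse
    intro p hp
    obtain ⟨m, r, rfl⟩ := exists_cons_of_isPath (Finset.mem_filter.mp hp).2
    rfl
  · -- right inverse
    rintro ⟨m, q⟩ hx
    obtain ⟨-, hq⟩ := Finset.mem_sigma.mp hx
    obtain ⟨hqW, -⟩ := Finset.mem_filter.mp hq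
    obtain ⟨-, -, hh, -⟩ := Finset.mem_filter.mp hqW
    dsimp only at hh ⊢
    rcases q with _ | ⟨b, r⟩
    · simp at hh
    · obtain rfl : b = m := by simpa using hh
      rfl
  · -- values
    intro p hp
    obtain ⟨m, r, rfl⟩ := exists_cons_of_isPath (Finset.mem_filter.mp hp).2
    simp only [List.tail_cons, List.head?, Option.getD_some]
    exact pw_cons c s m r

lemma pathSum_rec {R : V → V → Prop} {f : V → ℕ}
    (hmono : ∀ a b, R a b → f a < f b) (c : V → V → ℝ) (s t : V) :
    pathSum R c s t
      = ∑ m : V, (if R s m then c s m else 0)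
          * ((if m = t then 1 else 0) + pathSum R c m t) := by
  rw [pathSum_eq_sum hmono, path_first_edge hmono]
  refine Finset.sum_congr rfl (fun m _ => ?_)
  rw [walk_sum_split, pathSum_eq_sum hmono]

end VE2


lemma main_alg {V : Type*} [Fintype V] [DecidableEq V]
    (E E' Ej K : V → ℝ) (j : V)
    (hE'j : E' j = 0)
    (hE' : ∀ m, m ≠ j → E' m = E m + E j * Ej m)
    (hEjj : Ej j = 0)
    (hKj : K j = ∑ m : V, Ej m * K m) :
    ∑ m : V, E' m * K m = ∑ m : V, E m * K m := by
  have h2 : ∑ m ∈ Finset.univ.erase j, Ej m * K m = K j := by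
    rw [hKj, ← Finset.add_sum_erase _ (fun m => Ej m * K m) (Finset.mem_univ j),
      hEjj, zero_mul, zero_add]
  calc ∑ m : V, E' m * K m
      = ∑ m ∈ Finset.univ.erase j, E' m * K m := by
        rw [← Finset.add_sum_erase _ (fun m => E' m * K m) (Finset.mem_univ j),
          hE'j, zero_mul, zero_add]
    _ = ∑ m ∈ Finset.univ.erase j, (E m * K m + E j * (Ej m * K m)) := by
        refine Finset.sum_congr rfl fun m hm => ?_
        rw [hE' m (Finset.ne_of_mem_erase hm)]; ring
    _ = (∑ m ∈ Finset.univ.erase j, E m * K m)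
          + E j * ∑ m ∈ Finset.univ.erase j, (Ej m * K m) := by
        rw [Finset.sum_add_distrib, Finset.mul_sum]
    _ = E j * K j + ∑ m ∈ Finset.univ.erase j, E m * K m := by rw [h2]; ring
    _ = ∑ m : V, E m * K m := Finset.add_sum_erase _ (fun m => E m * K m) (Finset.mem_univ j)

/-- **Vertex elimination preserves path sums**: for an edge-labeled dag `G` and an
intermediate vertex `j`, for all vertices `s, t ≠ j` we have
`J_{G−j}(s,t) = J_G(s,t)`. -/
theorem vertex_elimination_preserves_path_sums
    {V : Type*} [Fintype V] [DecidableEq V]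
    (A : V → V → Bool) (c : V → V → ℝ)
    (f : V → ℕ) (hacyc : ∀ i j, A i j = true → f i < f j)
    (j : V) (hpred : ∃ i, A i j = true) (hsucc : ∃ k, A j k = true) :
    ∀ s t : V, s ≠ j → t ≠ j →
      pathSum (fun a b => elimAdj A j a b = true) (elimLab A c j) s t
        = pathSum (fun a b => A a b = true) c s t := by
  set R : V → V → Prop := fun a b => A a b = true with hR
  set R' : V → V → Prop := fun a b => elimAdj A j a b = true with hR'
  set c' : V → V → ℝ := elimLab A c j with hc'
  have hadj : ∀ a b, R' a b ↔ (a ≠ j ∧ b ≠ j ∧ (A a b = true ∨ (A a j = true ∧ A j b = true))) := by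
    intro a b
    simp only [hR', elimAdj, Bool.and_eq_true, Bool.not_eq_true', decide_eq_false_iff_not,
      Bool.or_eq_true]
    tauto
  have hmono : ∀ a b, R a b → f a < f b := hacyc
  have hmono' : ∀ a b, R' a b → f a < f b := by
    intro a b hab
    rcases (hadj a b).mp hab with ⟨-, -, h | ⟨h1, h2⟩⟩
    · exact hacyc _ _ h
    · exact (hacyc _ _ h1).trans (hacyc _ _ h2)
  have hkey : ∀ a b : V, a ≠ j → b ≠ j →
      (@ite ℝ (R' a b) (Classical.propDecidable _) (c' a b) 0)
        = (@ite ℝ (R a b) (Classical.propDecidable _) (c a b) 0)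
          + (@ite ℝ (R a j) (Classical.propDecidable _) (c a j) 0)
            * (@ite ℝ (R j b) (Classical.propDecidable _) (c j b) 0) := by
    intro a b ha hb
    have hr' : R' a b ↔ (A a b = true ∨ (A a j = true ∧ A j b = true)) := by
      rw [hadj a b]; tauto
    by_cases h1 : A a b = true <;> by_cases h2 : A a j = true <;>
      by_cases h3 : A j b = true <;>
      · simp only [hR, hr', hc', elimLab]
        simp [h1, h2, h3]
        try ring
  intro s t hs ht
  suffices H : ∀ n : ℕ, ∀ s : V, (Finset.univ.filter (fun v => f s < f v)).card < n →
      s ≠ j → pathSum R' c' s t = pathSum R c s t by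
    exact H _ s (Nat.lt_succ_self _) hs
  intro n
  induction n with
  | zero => intro s h; omega
  | succ n ih =>
    intro s hcard hsj
    have IH : ∀ m : V, R' s m → pathSum R' c' m t = pathSum R c m t := by
      intro m hm
      have hmj : m ≠ j := ((hadj s m).mp hm).2.1
      have hsm := hmono' s m hm
      have hsub : Finset.univ.filter (fun v => f m < f v)
          ⊆ Finset.univ.filter (fun v => f s < f v) := by
        intro v hv
        simp only [Finset.mem_filter, Finset.mem_univ, true_and] at hv ⊢
        omega
      have hlt : (Finset.univ.filter (fun v => f m < f v)).card
          < (Finset.univ.filter (fun v => f s < f v)).card := by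
        refine Finset.card_lt_card ((Finset.ssubset_iff_of_subset hsub).mpr ⟨m, ?_, ?_⟩)
        · simp only [Finset.mem_filter, Finset.mem_univ, true_and]; exact hsm
        · simp only [Finset.mem_filter, Finset.mem_univ, true_and]; omega
      exact ih m (by omega) hmj
    rw [pathSum_rec hmono' c' s t, pathSum_rec hmono c s t]
    have hK : ∀ m : V, (@ite ℝ (R' s m) (Classical.propDecidable _) (c' s m) 0) *
        ((if m = t then 1 else 0) + pathSum R' c' m t)
        = (@ite ℝ (R' s m) (Classical.propDecidable _) (c' s m) 0)
            * ((if m = t then 1 else 0) + pathSum R c m t) := by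
      intro m
      by_cases hm : R' s m
      · rw [IH m hm]
      · rw [if_neg hm, zero_mul, zero_mul]
    refine Eq.trans (Finset.sum_congr rfl (fun m _ => hK m)) ?_
    refine main_alg (fun m => @ite ℝ (R s m) (Classical.propDecidable _) (c s m) 0)
      (fun m => @ite ℝ (R' s m) (Classical.propDecidable _) (c' s m) 0)
      (fun m => @ite ℝ (R j m) (Classical.propDecidable _) (c j m) 0)
      (fun m => (if m = t then 1 else 0) + pathSum R c m t) j ?_ ?_ ?_ ?_
    · show @ite ℝ (R' s j) (Classical.propDecidable _) (c' s j) 0 = 0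
      rw [if_neg]
      intro h
      exact ((hadj s j).mp h).2.1 rfl
    · intro m hm
      exact hkey s m hsj hm
    · show @ite ℝ (R j j) (Classical.propDecidable _) (c j j) 0 = 0
      rw [if_neg]
      intro h
      exact absurd (hmono j j h) (lt_irrefl _)
    · show (if (j:V) = t then (1:ℝ) else 0) + pathSum R c j t = _
      rw [if_neg (fun h => ht h.symm), zero_add]
      exact pathSum_rec hmono c j t
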